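/- Let n, d, β be natural numbers and ε1, ε2, δ nonnegative reals. Suppose A is an (ε1,ε2,δ,β)-differentially private subset-retrieval algorithm on a ground set V of size n with hidden subsets of size d, such that for every d-subset e the distribution A(e) is supported on subsets of size exactly d. Define A' by A'(e) = pushforward of A(e) under the map s ↦ (s if d(s,e) ≤ β, else e). Then A' is a (0, 0, δ + 2·ε1 + (exp(ε2) − 1), β)-differentially private subset-retrieval algorithm, and for every d-subset e the distribution A'(e) is supported on subsets of size exactly d. -/
import Mathlib


open scoped ENNReal

/-- Distance between two finite sets: `d(e,f) = max(|e \ f|, |f \ e|)`. -/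
def setDist {γ : Type*} [DecidableEq γ] (e f : Finset γ) : ℕ :=
  max (e \ f).card (f \ e).card

/-- Probability that a sample from the PMF `μ` lands in the set `S`. -/
noncomputable def pr {γ : Type*} (μ : PMF γ) (S : Set γ) : ℝ :=
  (μ.toOuterMeasure S).toReal

lemma outer_le_one {γ : Type*} (μ : PMF γ) (S : Set γ) : μ.toOuterMeasure S ≤ 1 := by
  rw [PMF.toOuterMeasure_apply]
  calc ∑' x, S.indicator μ x ≤ ∑' x, μ x :=
        ENNReal.tsum_le_tsum fun x => Set.indicator_le_self S μ x
    _ = 1 := μ.tsum_coe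

lemma outer_ne_top {γ : Type*} (μ : PMF γ) (S : Set γ) : μ.toOuterMeasure S ≠ ⊤ :=
  ne_of_lt (lt_of_le_of_lt (outer_le_one μ S) ENNReal.one_lt_top)

lemma pr_nonneg {γ : Type*} (μ : PMF γ) (S : Set γ) : 0 ≤ pr μ S :=
  ENNReal.toReal_nonneg

lemma pr_le_one {γ : Type*} (μ : PMF γ) (S : Set γ) : pr μ S ≤ 1 := by
  have := outer_le_one μ S
  simpa [pr] using ENNReal.toReal_mono (by simp) this

lemma pr_mono {γ : Type*} (μ : PMF γ) {S T : Set γ} (h : S ⊆ T) : pr μ S ≤ pr μ T :=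
  ENNReal.toReal_mono (outer_ne_top μ T) (μ.toOuterMeasure.mono h)

lemma pr_union_le {γ : Type*} (μ : PMF γ) (S T : Set γ) :
    pr μ (S ∪ T) ≤ pr μ S + pr μ T := by
  have h : μ.toOuterMeasure (S ∪ T) ≤ μ.toOuterMeasure S + μ.toOuterMeasure T :=
    MeasureTheory.measure_union_le S T
  have := ENNReal.toReal_mono
    (by exact ENNReal.add_ne_top.2 ⟨outer_ne_top μ S, outer_ne_top μ T⟩) h
  rwa [ENNReal.toReal_add (outer_ne_top μ S) (outer_ne_top μ T)] at this

lemma pr_compl {γ : Type*} (μ : PMF γ) (S : Set γ) : pr μ Sᶜ = 1 - pr μ S := by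
  have h : μ.toOuterMeasure S + μ.toOuterMeasure Sᶜ = 1 := by
    rw [PMF.toOuterMeasure_apply, PMF.toOuterMeasure_apply, ← ENNReal.tsum_add,
      ← μ.tsum_coe]
    exact tsum_congr fun x => by by_cases h : x ∈ S <;> simp [h]
  have h' := congrArg ENNReal.toReal h
  rw [ENNReal.toReal_add (outer_ne_top μ S) (outer_ne_top μ Sᶜ)] at h'
  simp only [ENNReal.toReal_one] at h'
  simp only [pr]
  linarith

lemma pr_univ {γ : Type*} (μ : PMF γ) : pr μ Set.univ = 1 := by
  have : μ.toOuterMeasure Set.univ = 1 :=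
    (PMF.toOuterMeasure_apply_eq_one_iff μ Set.univ).2 (Set.subset_univ _)
  simp [pr, this]

lemma pr_map {γ : Type*} (μ : PMF γ) (f : γ → γ) (S : Set γ) :
    pr (μ.map f) S = pr μ (f ⁻¹' S) := by
  simp [pr, PMF.toOuterMeasure_map_apply]

lemma setDist_self {γ : Type*} [DecidableEq γ] (e : Finset γ) : setDist e e = 0 := by
  simp [setDist]

/-- `A` is an `(ε1, ε2, δ, β)_{n,d}` differentially-private solution to the
subset-retrieval problem. -/
def IsDP (n d β : ℕ) (ε1 ε2 δ : ℝ)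
    (A : Finset (Fin n) → PMF (Finset (Fin n))) : Prop :=
  (∀ e : Finset (Fin n), e.card = d →
      pr (A e) {s | setDist s e ≤ β} ≥ 1 - ε1) ∧
  (∀ ei ej : Finset (Fin n), ei.card = d → ej.card = d → setDist ei ej = 1 →
      ∀ S : Set (Finset (Fin n)),
        pr (A ei) S ≤ Real.exp ε2 * pr (A ej) S + δ)

theorem stmt_18 (n d β : ℕ) (ε1 ε2 δ : ℝ)
    (hε1 : 0 ≤ ε1) (hε2 : 0 ≤ ε2) (hδ : 0 ≤ δ)
    (A : Finset (Fin n) → PMF (Finset (Fin n)))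
    (hA : IsDP n d β ε1 ε2 δ A)
    (hsupp : ∀ e : Finset (Fin n), e.card = d → ∀ s ∈ (A e).support, s.card = d)
    (A' : Finset (Fin n) → PMF (Finset (Fin n)))
    (hA' : ∀ e : Finset (Fin n),
      A' e = (A e).map (fun s => if setDist s e ≤ β then s else e)) :
    IsDP n d β 0 0 (δ + 2 * ε1 + (Real.exp ε2 - 1)) A' ∧
      ∀ e : Finset (Fin n), e.card = d → ∀ s ∈ (A' e).support, s.card = d := by
  obtain ⟨hacc, hpriv⟩ := hA
  -- For each `e`, the always-accurate preimage fact
  have key : ∀ e : Finset (Fin n),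
      (fun s => if setDist s e ≤ β then s else e) ⁻¹' {s | setDist s e ≤ β}
        = Set.univ := by
    intro e
    ext s
    simp only [Set.mem_preimage, Set.mem_setOf_eq, Set.mem_univ, iff_true]
    by_cases h : setDist s e ≤ β
    · simpa [h] using h
    · simp [h, setDist_self]
  constructor
  · constructor
    · -- accuracy
      intro e he
      rw [hA' e, pr_map, key e, pr_univ]
      norm_num
    · -- privacy
      intro ei ej hi hj hdist S
      set gi : Finset (Fin n) → Finset (Fin n) :=
        fun s => if setDist s ei ≤ β then s else ei with hgi
      set gj : Finset (Fin n) → Finset (Fin n) :=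
        fun s => if setDist s ej ≤ β then s else ej with hgj
      set Bi : Set (Finset (Fin n)) := {s | setDist s ei ≤ β} with hBi
      set Bj : Set (Finset (Fin n)) := {s | setDist s ej ≤ β} with hBj
      -- complements have small mass under the respective PMFs
      have hci : pr (A ei) Biᶜ ≤ ε1 := by
        have := hacc ei hi
        rw [pr_compl]
        simp only [← hBi] at this ⊢
        linarith
      have hcj : pr (A ej) Bjᶜ ≤ ε1 := by
        have := hacc ej hj
        rw [pr_compl]
        simp only [← hBj] at this ⊢
        linarith
      -- preimage inclusions
      have hsub1 : gi ⁻¹' S ⊆ (S ∩ Bi) ∪ Biᶜ := by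
        intro s hs
        by_cases h : setDist s ei ≤ β
        · left
          refine ⟨?_, h⟩
          simpa [gi, h] using hs
        · right; exact h
      have hsub2 : S ∩ Bj ⊆ gj ⁻¹' S := by
        intro s hs
        have h : setDist s ej ≤ β := hs.2
        simpa [gj, h] using hs.1
      have step1 : pr (A' ei) S ≤ pr (A ei) (S ∩ Bi) + ε1 := by
        rw [hA' ei, pr_map]
        calc pr (A ei) (gi ⁻¹' S) ≤ pr (A ei) ((S ∩ Bi) ∪ Biᶜ) := pr_mono _ hsub1
          _ ≤ pr (A ei) (S ∩ Bi) + pr (A ei) Biᶜ := pr_union_le _ _ _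
          _ ≤ pr (A ei) (S ∩ Bi) + ε1 := by linarith
      have step2 : pr (A ei) (S ∩ Bi) ≤ Real.exp ε2 * pr (A ej) (S ∩ Bi) + δ :=
        hpriv ei ej hi hj hdist (S ∩ Bi)
      have step3 : pr (A ej) (S ∩ Bi) ≤ pr (A' ej) S + ε1 := by
        rw [hA' ej, pr_map]
        calc pr (A ej) (S ∩ Bi)
            ≤ pr (A ej) ((S ∩ Bj) ∪ Bjᶜ) := by
              apply pr_mono
              intro s hs
              by_cases h : setDist s ej ≤ β
              · left; exact ⟨hs.1, h⟩
              · right; exact h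
          _ ≤ pr (A ej) (S ∩ Bj) + pr (A ej) Bjᶜ := pr_union_le _ _ _
          _ ≤ pr (A ej) (gj ⁻¹' S) + ε1 := by
              have := pr_mono (A ej) hsub2
              linarith
      have hx1 : pr (A ej) (S ∩ Bi) ≤ 1 := pr_le_one _ _
      have hexp : 1 ≤ Real.exp ε2 := by
        have := Real.exp_le_exp.2 hε2
        simpa using Real.one_le_exp hε2
      have hexpmul : Real.exp ε2 * pr (A ej) (S ∩ Bi)
          ≤ pr (A ej) (S ∩ Bi) + (Real.exp ε2 - 1) := by
        have h0 : 0 ≤ pr (A ej) (S ∩ Bi) := pr_nonneg _ _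
        nlinarith
      rw [Real.exp_zero]
      linarith
  · -- support
    intro e he s hs
    rw [hA' e, PMF.support_map] at hs
    obtain ⟨t, ht, rfl⟩ := hs
    by_cases h : setDist t e ≤ β
    · simpa [h] using hsupp e he t ht
    · simpa [h] using he
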